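/- Let J ⊆ [0,∞) be a set closed under addition. If J has at least one accumulation point in ℝ, then J has infinitely many accumulation points in ℝ. Consequently, a subset of [0,∞) which is closed under addition and has only finitely many accumulation points in ℝ has no accumulation point in ℝ at all. -/

import Mathlib

open Filter

/-- A set of reals satisfies the descending chain condition (DCC) if it contains
no infinite strictly decreasing sequence. -/
def DCC (S : Set ℝ) : Prop := ¬ ∃ f : ℕ → ℝ, StrictAnti f ∧ ∀ n, f n ∈ S

/-- A set of reals satisfies the ascending chain condition (ACC) if it contains
no infinite strictly increasing sequence. -/
def ACC (S : Set ℝ) : Prop := ¬ ∃ f : ℕ → ℝ, StrictMono f ∧ ∀ n, f n ∈ S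

/-- `x` is an accumulation point of `S` if every neighborhood of `x` contains a
point of `S` different from `x`. -/
def IsAccPt (x : ℝ) (S : Set ℝ) : Prop := ∀ ε > 0, ∃ y ∈ S, y ≠ x ∧ |y - x| < ε

/-- The set `∂S` of accumulation points of `S` in `ℝ`. -/
def accPts (S : Set ℝ) : Set ℝ := {x | IsAccPt x S}

/-- The set of all (nonempty) finite sums of elements of `I`. -/
def finSums (I : Set ℝ) : Set ℝ :=
  {x | ∃ l : ℕ, 0 < l ∧ ∃ g : Fin l → ℝ, (∀ p, g p ∈ I) ∧ x = ∑ p, g p}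

/-- `I₊ = {0} ∪ { x ∈ [0,1] : x is a nonempty finite sum of elements of I }`. -/
def plusSet (I : Set ℝ) : Set ℝ := {0} ∪ (Set.Icc 0 1 ∩ finSums I)

/-- `D(I) = { a ≤ 1 : a = (m - 1 + f)/m, m ∈ ℕ⁺, f ∈ I₊ }`. -/
def DSet (I : Set ℝ) : Set ℝ :=
  {a | a ≤ 1 ∧ ∃ m : ℕ, 0 < m ∧ ∃ f ∈ plusSet I, a = ((m : ℝ) - 1 + f) / m}

/-- `𝒟_c(I;J) = { a ≤ 1 : a = (m - 1 + f + kc)/m, m ∈ ℕ⁺, f ∈ I₊,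
k a nonzero finite sum of elements of J }`. -/
def DcSet (I J : Set ℝ) (c : ℝ) : Set ℝ :=
  {a | a ≤ 1 ∧ ∃ m : ℕ, 0 < m ∧ ∃ f ∈ plusSet I, ∃ k ∈ finSums J, k ≠ 0 ∧
    a = ((m : ℝ) - 1 + f + k * c) / m}

/-- The closure `S̄ = S ∪ ∂S` of `S` in `ℝ`. -/
def clSet (S : Set ℝ) : Set ℝ := S ∪ accPts S

/-- If `J ⊆ [0,∞)` is closed under addition and has at least one accumulation
point in `ℝ`, then it has infinitely many accumulation points in `ℝ`.
Consequently, if it has only finitely many accumulation points in `ℝ`, it has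
none at all. -/
theorem accPts_infinite_of_addClosed (J : Set ℝ) (hJ0 : J ⊆ Set.Ici 0)
    (hadd : ∀ a ∈ J, ∀ b ∈ J, a + b ∈ J) :
    ((∃ x, IsAccPt x J) → (accPts J).Infinite) ∧
      ((accPts J).Finite → accPts J = ∅) := by
  have hmain : (∃ x, IsAccPt x J) → (accPts J).Infinite := by
    rintro ⟨x, hx⟩
    have htrans : ∀ y ∈ J, (x + y) ∈ accPts J := by
      intro y hy ε hε
      obtain ⟨z, hz, hzx, hzd⟩ := hx ε hε
      exact ⟨z + y, hadd z hz y hy, by intro h; exact hzx (by linarith), by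
        have : z + y - (x + y) = z - x := by ring
        rw [this]; exact hzd⟩
    have hJinf : J.Infinite := by
      intro hfin
      have hfin' : (J \ {x}).Finite := hfin.diff
      have hne : (J \ {x}).Nonempty := by
        obtain ⟨z, hz, hzx, _⟩ := hx 1 one_pos
        exact ⟨z, hz, hzx⟩
      set t := hfin'.toFinset with ht
      have htne : t.Nonempty := by
        rwa [Set.Finite.toFinset_nonempty]
      set δ := t.inf' htne (fun z => |z - x|) with hδ
      have hδpos : 0 < δ := by
        rw [hδ, Finset.lt_inf'_iff]
        intro z hz
        rw [Set.Finite.mem_toFinset] at hz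
        exact abs_pos.mpr (sub_ne_zero.mpr hz.2)
      obtain ⟨z, hz, hzx, hzd⟩ := hx δ hδpos
      have hzt : z ∈ t := by
        rw [Set.Finite.mem_toFinset]
        exact ⟨hz, hzx⟩
      have := Finset.inf'_le (fun z => |z - x|) hzt
      change δ ≤ |z - x| at this
      linarith
    have hmono : (fun y => x + y) '' J ⊆ accPts J := by
      rintro _ ⟨y, hy, rfl⟩
      exact htrans y hy
    exact (hJinf.image (fun a _ b _ h => by simpa using h)).mono hmono
  refine ⟨hmain, fun hfin => ?_⟩
  ext x
  simp only [Set.mem_empty_iff_false, iff_false]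
  intro hx
  exact hmain ⟨x, hx⟩ hfin
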